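/- Let g₁, …, g_m be pairwise commuting unitary endomorphisms of a complex inner product space Σ of dimension 2^m, such that each g_j is diagonalizable with eigenvalues exp(i t_j) and exp(−i t_j), and all 2^m simultaneous eigenspaces are one-dimensional. Then the product g = g₁ ⋯ g_m has eigenvalues exp(i(±t₁ ± t₂ ± ⋯ ± t_m)) over all independent sign choices, each simultaneous sign pattern contributing a one-dimensional eigenspace; consequently, if g ≠ 1 then the eigenvalue 1 of g has multiplicity at most 2^{m−1}. -/

import Mathlib

open Module Complex

private lemma aux_prod {ι V : Type*} [DecidableEq ι] [AddCommGroup V] [Module ℂ V]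
    (g : ι → (V →ₗ[ℂ] V)) (x : V) (c : ι → ℂ)
    (hx : ∀ j, g j x = c j • x) (s : Finset ι) :
    ∀ (h : (s : Set ι).Pairwise (Function.onFun Commute g)),
      (s.noncommProd g h) x = (∏ j ∈ s, c j) • x := by
  induction s using Finset.induction_on with
  | empty => intro h; simp
  | @insert a s ha ih =>
    intro h
    rw [Finset.noncommProd_insert_of_notMem _ _ _ _ ha, Module.End.mul_apply,
      ih _, map_smul, hx, smul_smul, Finset.prod_insert ha, mul_comm]

private lemma aux_eig {ι V : Type*} [Fintype ι] [AddCommGroup V] [Module ℂ V]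
    (b : Basis ι ℂ V) (lam : ι → ℂ) (f : V →ₗ[ℂ] V)
    (hf : ∀ i, f (b i) = lam i • b i) (μ : ℂ) :
    Module.finrank ℂ (Module.End.eigenspace f μ) = Nat.card {i // lam i = μ} := by
  classical
  have hspan : Module.End.eigenspace f μ
      = Submodule.span ℂ (Set.range (fun i : {i // lam i = μ} => b i)) := by
    apply le_antisymm
    · intro x hx
      rw [Module.End.mem_eigenspace_iff] at hx
      have hrep : ∀ i, lam i ≠ μ → b.repr x i = 0 := by
        intro i hi
        have h1 : f x = ∑ k, (lam k * b.repr x k) • b k := by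
          conv_lhs => rw [← b.sum_repr x]
          rw [map_sum]
          refine Finset.sum_congr rfl fun k _ => ?_
          rw [map_smul, hf, smul_smul, mul_comm]
        have h2 : b.repr (f x) i = lam i * b.repr x i := by
          rw [h1, map_sum]
          simp [Finsupp.single_apply, Finset.sum_ite_eq']
        rw [hx] at h2
        simp only [map_smul, Finsupp.smul_apply, smul_eq_mul] at h2
        have h3 : (lam i - μ) * b.repr x i = 0 := by linear_combination -h2
        rcases mul_eq_zero.mp h3 with h | h
        · exact absurd (sub_eq_zero.mp h) hi
        · exact h
      rw [← b.sum_repr x]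
      apply Submodule.sum_mem
      intro i _
      by_cases hi : lam i = μ
      · exact Submodule.smul_mem _ _ (Submodule.subset_span ⟨⟨i, hi⟩, rfl⟩)
      · rw [hrep i hi]; simp
    · rw [Submodule.span_le]
      rintro _ ⟨⟨i, hi⟩, rfl⟩
      rw [SetLike.mem_coe, Module.End.mem_eigenspace_iff, hf, hi]
  rw [hspan]
  have hli : LinearIndependent ℂ (fun i : {i // lam i = μ} => b i) :=
    b.linearIndependent.comp _ Subtype.val_injective
  rw [finrank_span_eq_card hli, Nat.card_eq_fintype_card]

theorem product_of_commuting_unitaries_eigenvalues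
    (m : ℕ) (SP : Type*) [NormedAddCommGroup SP] [InnerProductSpace ℂ SP]
    (b : Basis (Fin m → Bool) ℂ SP) (hb : Orthonormal ℂ b)
    (t : Fin m → ℝ) (g : Fin m → (SP →ₗ[ℂ] SP))
    (hunitary : ∀ j (x : SP), ‖g j x‖ = ‖x‖)
    (hcomm : ((Finset.univ : Finset (Fin m)) : Set (Fin m)).Pairwise (Function.onFun Commute g))
    (hdiag : ∀ j (ε : Fin m → Bool),
      g j (b ε) = Complex.exp (Complex.I * (if ε j then (t j : ℂ) else -(t j : ℂ))) • b ε) :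
    (∀ ε : Fin m → Bool,
      (Finset.univ.noncommProd g hcomm) (b ε)
        = Complex.exp (Complex.I * ∑ j, (if ε j then (t j : ℂ) else -(t j : ℂ))) • b ε) ∧
    (∀ μ : ℂ, Module.finrank ℂ
        (Module.End.eigenspace (Finset.univ.noncommProd g hcomm) μ)
      = Nat.card {ε : Fin m → Bool //
          Complex.exp (Complex.I * ∑ j, (if ε j then (t j : ℂ) else -(t j : ℂ))) = μ}) ∧
    ((Finset.univ.noncommProd g hcomm) ≠ 1 →
      Module.finrank ℂ
        (Module.End.eigenspace (Finset.univ.noncommProd g hcomm) 1) ≤ 2 ^ (m - 1)) := by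
  classical
  set lam : (Fin m → Bool) → ℂ :=
    fun ε => Complex.exp (Complex.I * ∑ j, (if ε j then (t j : ℂ) else -(t j : ℂ))) with hlam
  have part1 : ∀ ε : Fin m → Bool,
      (Finset.univ.noncommProd g hcomm) (b ε) = lam ε • b ε := by
    intro ε
    rw [aux_prod g (b ε)
      (fun j => Complex.exp (Complex.I * (if ε j then (t j : ℂ) else -(t j : ℂ))))
      (fun j => hdiag j ε) Finset.univ hcomm,
      ← Complex.exp_sum, ← Finset.mul_sum]
  have part2 : ∀ μ : ℂ, Module.finrank ℂ
      (Module.End.eigenspace (Finset.univ.noncommProd g hcomm) μ)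
      = Nat.card {ε : Fin m → Bool // lam ε = μ} :=
    fun μ => aux_eig b lam _ part1 μ
  refine ⟨part1, part2, fun hne => ?_⟩
  have hε₀ : ∃ ε, lam ε ≠ 1 := by
    by_contra h
    push_neg at h
    exact hne (b.ext fun ε => by rw [part1 ε, h ε, one_smul, Module.End.one_apply])
  obtain ⟨ε₀, hε₀⟩ := hε₀
  rw [part2 1, Nat.card_eq_fintype_card, Fintype.card_subtype]
  by_cases hcase : ∃ j, Complex.exp (2 * Complex.I * (t j : ℂ)) ≠ 1
  · obtain ⟨j, hj⟩ := hcase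
    have hm : 0 < m := j.pos
    set flip : (Fin m → Bool) → (Fin m → Bool) :=
      fun ε => Function.update ε j (!ε j) with hflip
    have hflip2 : ∀ ε, flip (flip ε) = ε := by
      intro ε
      simp [hflip, Function.update_idem]
    have hkey : ∀ ε, lam ε = 1 → lam (flip ε) ≠ 1 := by
      intro ε hε
      have hfun : (fun j' => (if (flip ε) j' then (t j' : ℂ) else -(t j')))
          = Function.update (fun j' => if ε j' then (t j' : ℂ) else -(t j')) j
              (if !ε j then (t j : ℂ) else -(t j)) := by
        funext j'
        by_cases h : j' = j
        · subst h; simp [hflip]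
        · simp [hflip, Function.update_of_ne h]
      have hsum : (∑ j', (if (flip ε) j' then (t j' : ℂ) else -(t j')))
          = (∑ j', (if ε j' then (t j' : ℂ) else -(t j')))
            + (if ε j then -(2 * t j : ℂ) else (2 * t j : ℂ)) := by
        rw [hfun, Finset.sum_update_of_mem (Finset.mem_univ j),
          ← Finset.sum_erase_add Finset.univ _ (Finset.mem_univ j), Finset.sum_erase_eq_sub
            (Finset.mem_univ j)]
        cases hεj : ε j <;> simp [hεj] <;> ring
      have hmul : lam (flip ε)
          = lam ε * Complex.exp (Complex.I * (if ε j then -(2 * t j : ℂ) else (2 * t j : ℂ))) := by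
        rw [hlam]
        simp only
        rw [hsum, mul_add, Complex.exp_add]
      rw [hmul, hε, one_mul]
      cases hεj : ε j
      · simp only [hεj, Bool.false_eq_true, if_false]
        rw [show Complex.I * (2 * (t j : ℂ)) = 2 * Complex.I * (t j : ℂ) by ring]
        exact hj
      · simp only [hεj, if_true]
        intro hcon
        apply hj
        have hone : Complex.exp (2 * Complex.I * (t j : ℂ))
            * Complex.exp (Complex.I * -(2 * t j : ℂ)) = 1 := by
          rw [← Complex.exp_add,
            show 2 * Complex.I * (t j : ℂ) + Complex.I * -(2 * t j : ℂ) = 0 by ring]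
          exact Complex.exp_zero
        rw [hcon, mul_one] at hone
        exact hone
    have hcard : (Finset.univ.filter (fun ε => lam ε = 1)).card
        ≤ (Finset.univ.filter (fun ε => ¬ lam ε = 1)).card := by
      apply Finset.card_le_card_of_injOn flip
      · intro ε hε
        simp only [Finset.mem_coe, Finset.mem_filter, Finset.mem_univ, true_and] at hε ⊢
        exact hkey ε hε
      · intro a _ b _ hab
        have := congrArg flip hab
        rwa [hflip2, hflip2] at this
    have htotal : (Finset.univ.filter (fun ε => lam ε = 1)).card
        + (Finset.univ.filter (fun ε => ¬ lam ε = 1)).card = 2 ^ m := by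
      rw [Finset.card_filter_add_card_filter_not]
      simp [Finset.card_univ]
    have h2m : 2 ^ m = 2 * 2 ^ (m - 1) := by
      rw [← pow_succ']
      congr 1
      omega
    omega
  · push_neg at hcase
    have hsame : ∀ ε, lam ε = lam ε₀ := by
      intro ε
      rw [hlam]
      simp only
      rw [Finset.mul_sum, Finset.mul_sum, Complex.exp_sum, Complex.exp_sum]
      apply Finset.prod_congr rfl
      intro j _
      have hexp : Complex.exp (Complex.I * (t j : ℂ)) = Complex.exp (Complex.I * -(t j : ℂ)) := by
        have h1 : Complex.exp (Complex.I * (t j : ℂ)) * Complex.exp (Complex.I * (t j : ℂ)) = 1 := by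
          rw [← Complex.exp_add,
            show Complex.I * (t j : ℂ) + Complex.I * (t j : ℂ) = 2 * Complex.I * (t j : ℂ) by ring]
          exact hcase j
        have h2 : Complex.exp (Complex.I * (t j : ℂ)) * Complex.exp (Complex.I * -(t j : ℂ)) = 1 := by
          rw [← Complex.exp_add,
            show Complex.I * (t j : ℂ) + Complex.I * -(t j : ℂ) = 0 by ring]
          exact Complex.exp_zero
        exact mul_left_cancel₀ (Complex.exp_ne_zero _) (h1.trans h2.symm)
      cases hε : ε j <;> cases hε0 : ε₀ j <;> simp [hε, hε0, hexp]
    have hempty : (Finset.univ.filter (fun ε => lam ε = 1)).card = 0 := by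
      rw [Finset.card_eq_zero, Finset.filter_eq_empty_iff]
      intro ε _
      rw [hsame ε]
      exact hε₀
    rw [hempty]
    exact Nat.zero_le _
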